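/- arXiv:1812.08080 — 2 statements merged into one kernel-verified Lean document; each statement's English description precedes it below -/
import Mathlib

section
/- Let p be an odd prime with p ≡ 3 (mod 4), and let i be an integer. Then Σ_{j=0}^{p-1} (j/p)·((i²+3ij+2j²)/p) = 0. -/
lemma sum_range_zmod {p : ℕ} [NeZero p] (f : ZMod p → ℤ) :
    ∑ j ∈ Finset.range p, f (j : ZMod p) = ∑ x : ZMod p, f x := by
  refine Finset.sum_nbij' (fun j => (j : ZMod p)) (fun x => x.val) ?_ ?_ ?_ ?_ ?_
  · intro j _; exact Finset.mem_univ _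
  · intro x _; exact Finset.mem_range.mpr x.val_lt
  · intro j hj; exact ZMod.val_cast_of_lt (Finset.mem_range.mp hj)
  · intro x _; exact ZMod.natCast_rightInverse x
  · intro j _; rfl

theorem stmt_3 (p : ℕ) [Fact p.Prime] (hp : p % 4 = 3) (i : ℤ) :
    ∑ j ∈ Finset.range p,
        legendreSym p j * legendreSym p (i ^ 2 + 3 * i * j + 2 * j ^ 2) = 0 := by
  have hp2 : p ≠ 2 := by omega
  have hmul : ∀ j : ℤ, legendreSym p j * legendreSym p (i ^ 2 + 3 * i * j + 2 * j ^ 2)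
      = legendreSym p (j * (i + j) * (i + 2 * j)) := by
    intro j
    rw [legendreSym.mul, legendreSym.mul]
    have : i ^ 2 + 3 * i * j + 2 * j ^ 2 = (i + j) * (i + 2 * j) := by ring
    rw [this, legendreSym.mul]
    ring
  have hls : ∀ a : ℤ, legendreSym p a = quadraticChar (ZMod p) (a : ZMod p) := fun a => rfl
  set χ := quadraticChar (ZMod p) with hχ
  have hneg : χ (-1) = -1 := by
    have := legendreSym.at_neg_one (p := p) hp2
    rw [hls, ZMod.χ₄_nat_three_mod_four hp] at this
    simpa using this
  have key : ∑ j ∈ Finset.range p,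
      legendreSym p j * legendreSym p (i ^ 2 + 3 * i * j + 2 * j ^ 2)
      = ∑ x : ZMod p, χ (x * ((i : ZMod p) + x) * ((i : ZMod p) + 2 * x)) := by
    rw [← sum_range_zmod (fun x : ZMod p => χ (x * ((i : ZMod p) + x) * ((i : ZMod p) + 2 * x)))]
    refine Finset.sum_congr rfl fun j hj => ?_
    rw [hmul, hls]
    push_cast
    ring_nf
  rw [key]
  set S := ∑ x : ZMod p, χ (x * ((i : ZMod p) + x) * ((i : ZMod p) + 2 * x)) with hS
  have hSneg : S = -S := by
    nth_rewrite 1 [hS]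
    rw [← Equiv.sum_comp (Equiv.subLeft (-(i : ZMod p)))
      (fun x => χ (x * ((i : ZMod p) + x) * ((i : ZMod p) + 2 * x)))]
    rw [hS, ← Finset.sum_neg_distrib]
    refine Finset.sum_congr rfl fun x _ => ?_
    have harg : (Equiv.subLeft (-(i : ZMod p)) x) * ((i : ZMod p) + Equiv.subLeft (-(i : ZMod p)) x)
        * ((i : ZMod p) + 2 * Equiv.subLeft (-(i : ZMod p)) x)
        = -1 * (x * ((i : ZMod p) + x) * ((i : ZMod p) + 2 * x)) := by
      simp only [Equiv.subLeft_apply]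
      ring
    rw [harg, map_mul, hneg]
    ring
  omega
end

section
/- Let p be a prime with p ≡ 1 (mod 4), and let a, b, c be nonzero elements of F_p. Write A_p = Σ_{x∈F_p} χ_p(ax⁵+bx³+cx), where χ_p is the Legendre symbol as a map to the integers. Then, as elements of F_p, A_p mod p equals −C((p−1)/2, (p−1)/4) · b^{(p−1)/4} · (a^{(p−1)/4} + c^{(p−1)/4}) · f(ac/b²), where f(z) = 1 + Σ_{k=1}^{⌊(p−1)/8⌋} ∏_{j=0}^{k−1} ((8j+1)(8j+5))/(4(j+1)(4j+3)) · z^k is a polynomial over F_p. -/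
open Finset Nat

lemma aux_sum_pow (p : ℕ) [Fact p.Prime] (N : ℕ) (hN : N ≠ 0) :
    (∑ x : ZMod p, x ^ N) = if (p - 1) ∣ N then (-1 : ZMod p) else 0 := by
  classical
  have h2 : ((univ : Finset (ZMod p)ˣ).map ⟨Units.val, Units.val_injective⟩) = univ \ {0} := by
    ext x
    simpa only [mem_map, mem_univ, Function.Embedding.coeFn_mk, true_and, mem_sdiff,
      mem_singleton] using ⟨by rintro ⟨u, rfl⟩; exact u.ne_zero, fun h => ⟨Units.mk0 x h, rfl⟩⟩
  calc ∑ x : ZMod p, x ^ N = ∑ x ∈ univ \ {(0:ZMod p)}, x ^ N := by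
        rw [← Finset.sum_sdiff (Finset.subset_univ {(0:ZMod p)}), Finset.sum_singleton,
          zero_pow hN, add_zero]
    _ = ∑ x : (ZMod p)ˣ, ((x:ZMod p)) ^ N := by rw [← h2, Finset.sum_map]; rfl
    _ = _ := by rw [FiniteField.sum_pow_units, ZMod.card]

lemma aux_tri (t k : ℕ) (hk : 2*k ≤ t) :
    Nat.choose (2*t) (2*t-k) * Nat.choose (2*t-k) (t+k)
      = Nat.choose (2*t) (t-k) * Nat.choose (t-k) k := by
  have h1 : Nat.choose (2*t-k) (t+k) * (t+k)! * (t-2*k)! = (2*t-k)! := by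
    have := Nat.choose_mul_factorial_mul_factorial (n := 2*t-k) (k := t+k) (by omega)
    rwa [show 2*t-k-(t+k) = t-2*k by omega] at this
  have h2 : Nat.choose (2*t) (2*t-k) * (2*t-k)! * k ! = (2*t)! := by
    have := Nat.choose_mul_factorial_mul_factorial (n := 2*t) (k := 2*t-k) (by omega)
    rwa [show 2*t-(2*t-k) = k by omega] at this
  have h3 : Nat.choose (t-k) k * k ! * (t-2*k)! = (t-k)! := by
    have := Nat.choose_mul_factorial_mul_factorial (n := t-k) (k := k) (by omega)
    rwa [show t-k-k = t-2*k by omega] at this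
  have h4 : Nat.choose (2*t) (t-k) * (t-k)! * (t+k)! = (2*t)! := by
    have := Nat.choose_mul_factorial_mul_factorial (n := 2*t) (k := t-k) (by omega)
    rwa [show 2*t-(t-k) = t+k by omega] at this
  have key : (Nat.choose (2*t) (2*t-k) * Nat.choose (2*t-k) (t+k)) * ((t+k)! * (t-2*k)! * k !)
      = (Nat.choose (2*t) (t-k) * Nat.choose (t-k) k) * ((t+k)! * (t-2*k)! * k !) := by
    calc (Nat.choose (2*t) (2*t-k) * Nat.choose (2*t-k) (t+k)) * ((t+k)! * (t-2*k)! * k !)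
        = Nat.choose (2*t) (2*t-k) * (Nat.choose (2*t-k) (t+k) * (t+k)! * (t-2*k)!) * k ! := by
          ring
      _ = (2*t)! := by rw [h1, ← h2]
      _ = Nat.choose (2*t) (t-k) * (Nat.choose (t-k) k * k ! * (t-2*k)!) * (t+k)! := by
            rw [h3, ← h4]
      _ = _ := by ring
  exact Nat.eq_of_mul_eq_mul_right (by positivity) key

lemma aux_ratio (t k : ℕ) (hk : 2*(k+1) ≤ t) :
    Nat.choose (2*t) (t-(k+1)) * Nat.choose (t-(k+1)) (k+1) * ((k+1)*(t+k+1))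
      = Nat.choose (2*t) (t-k) * Nat.choose (t-k) k * ((t-2*k)*(t-2*k-1)) := by
  obtain ⟨u, rfl⟩ : ∃ u, t = u+2*k+2 := ⟨t-2*k-2, by omega⟩
  rw [show u+2*k+2-(k+1) = u+k+1 by omega, show u+2*k+2-k = u+k+2 by omega,
    show u+2*k+2-2*k = u+2 by omega, show u+2-1 = u+1 by omega,
    show 2*(u+2*k+2) = 2*u+4*k+4 by omega, show u+2*k+2+k+1 = u+3*k+3 by omega]
  have A := Nat.choose_succ_right_eq (u+k+1) k
  rw [show u+k+1-k = u+1 by omega] at A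
  have B := Nat.choose_succ_right_eq (2*u+4*k+4) (u+k+1)
  rw [show 2*u+4*k+4-(u+k+1) = u+3*k+3 by omega, show u+k+1+1 = u+k+2 by omega] at B
  have C1 := Nat.add_one_mul_choose_eq (u+k+1) k
  have C2 := Nat.choose_succ_right_eq (u+k+2) k
  rw [show u+k+2-k = u+2 by omega] at C2
  simp only [Nat.succ_eq_add_one, show u+k+1+1 = u+k+2 by omega] at C1
  have C := C1.trans C2
  zify at A B C ⊢
  linear_combination ((2*u+4*k+4).choose (u+k+1) * (u+3*k+3) : ℤ) * A
    - ((u+k+1).choose k * (u+1) : ℤ) * B + ((2*u+4*k+4).choose (u+k+2) * (u+1) : ℤ) * C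

lemma aux_M (p : ℕ) [Fact p.Prime] (T : ℕ) (h4T : 4*T = p-1) (hp5 : 5 ≤ p) :
    ∀ k, 2*k ≤ T →
    ((Nat.choose (2*T) (T-k) * Nat.choose (T-k) k : ℕ) : ZMod p)
      = ((Nat.choose (2*T) T : ℕ) : ZMod p) *
        ∏ j ∈ range k, (((8*j+1)*(8*j+5) : ℕ) : ZMod p) / (((4*(j+1)*(4*j+3) : ℕ) : ZMod p)) := by
  have hpp : p.Prime := Fact.out
  have hnz : ∀ n : ℕ, 0 < n → n < p → ((n : ℕ) : ZMod p) ≠ 0 := by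
    intro n h1 h2 h
    rw [ZMod.natCast_eq_zero_iff] at h
    have := Nat.le_of_dvd h1 h
    omega
  intro k
  induction k with
  | zero => simp
  | succ k IH =>
    intro hk
    have hk' : 2*k ≤ T := by omega
    rw [prod_range_succ, ← mul_assoc, ← IH hk']
    -- invertibility facts
    have hd1 : ((k+1 : ℕ) : ZMod p) ≠ 0 := hnz (k+1) (by omega) (by omega)
    have hd2 : ((T+k+1 : ℕ) : ZMod p) ≠ 0 := hnz (T+k+1) (by omega) (by omega)
    have hden : (((4*(k+1)*(4*k+3) : ℕ)) : ZMod p) ≠ 0 := by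
      intro h
      rw [ZMod.natCast_eq_zero_iff, Nat.Prime.dvd_mul hpp, Nat.Prime.dvd_mul hpp] at h
      rcases h with (h | h) | h <;> have := Nat.le_of_dvd (by omega) h <;> omega
    rw [← mul_div_assoc, eq_div_iff hden]
    -- cast of aux_ratio
    have E := congrArg (fun n : ℕ => (n : ZMod p)) (aux_ratio T k hk)
    simp only [Nat.cast_mul] at E
    rw [show T-2*k-1 = T-(2*k+1) by omega, Nat.cast_sub (by omega : 2*k+1 ≤ T),
      Nat.cast_sub (by omega : 2*k ≤ T)] at E
    push_cast at E ⊢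
    have hτ4 : (4 : ZMod p) * ((T : ℕ) : ZMod p) = -1 := by
      have h1 : ((4*T : ℕ) : ZMod p) = ((p-1 : ℕ) : ZMod p) := by rw [h4T]
      have h2 : ((p-1:ℕ) : ZMod p) = -1 := by
        rw [Nat.cast_sub (by omega : 1 ≤ p)]; simp
      push_cast at h1; rw [h1, h2]
    set τ : ZMod p := ((T : ℕ) : ZMod p)
    set K : ZMod p := ((k : ℕ) : ZMod p)
    set Mk1 : ZMod p := ((Nat.choose (2*T) (T-(k+1)) : ℕ) : ZMod p) * ((Nat.choose (T-(k+1)) (k+1) : ℕ) : ZMod p) with hMk1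
    set Mk : ZMod p := ((Nat.choose (2*T) (T-k) : ℕ) : ZMod p) * ((Nat.choose (T-k) k : ℕ) : ZMod p) with hMk
    linear_combination (16 : ZMod p) * E
      + (-4*Mk1*(K+1) - Mk*(16*K+6) + (4*τ+1)*Mk) * hτ4

lemma aux_S1 (p : ℕ) [Fact p.Prime] (T : ℕ) (F : ℕ → ℕ → ZMod p)
    (hF0 : ∀ i l, i < l → F i l = 0) :
    ∑ i ∈ range (2*T+1), ∑ l ∈ range (i+1), F i l * (if i+l = T then (-1:ZMod p) else 0)
      = ∑ k ∈ range (T/2+1), -F (T-k) k := by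
  classical
  have h1 : ∀ i ∈ range (2*T+1),
      ∑ l ∈ range (i+1), F i l * (if i+l = T then (-1:ZMod p) else 0)
        = ∑ l ∈ range (2*T+1), F i l * (if i+l = T then (-1:ZMod p) else 0) := by
    intro i hi
    rw [mem_range] at hi
    apply Finset.sum_subset
    · rw [range_subset_range]; omega
    · intro l _ hnl
      rw [mem_range, not_lt] at hnl
      rw [hF0 i l (by omega), zero_mul]
  rw [Finset.sum_congr rfl h1, ← Finset.sum_product']
  have h2 : ∀ q ∈ range (2*T+1) ×ˢ range (2*T+1),
      F q.1 q.2 * (if q.1+q.2 = T then (-1:ZMod p) else 0)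
        = if q.1+q.2 = T then -F q.1 q.2 else 0 := by
    intro q _
    split_ifs <;> ring
  rw [Finset.sum_congr rfl h2, ← Finset.sum_filter]
  have h3 : ∑ q ∈ (range (2*T+1) ×ˢ range (2*T+1)).filter (fun q => q.1+q.2 = T),
      -F q.1 q.2 = ∑ k ∈ range (T+1), -F (T-k) k := by
    refine Finset.sum_nbij' (fun q => q.2) (fun k => (T-k, k)) ?_ ?_ ?_ ?_ ?_
    · intro q hq
      simp only [mem_filter, mem_product, mem_range] at hq
      simp only [mem_range]; omega
    · intro k hk
      simp only [mem_range] at hk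
      simp only [mem_filter, mem_product, mem_range]; omega
    · intro q hq
      simp only [mem_filter, mem_product, mem_range] at hq
      ext <;> simp <;> omega
    · intro k hk; simp
    · intro q hq
      simp only [mem_filter, mem_product, mem_range] at hq
      have e1 : T - q.2 = q.1 := by omega
      rw [e1]
  rw [h3]
  refine (Finset.sum_subset ?_ ?_).symm
  · rw [range_subset_range]; omega
  · intro k hk hnk
    rw [mem_range] at hk
    rw [mem_range, not_lt] at hnk
    rw [hF0 (T-k) k (by omega), neg_zero]

lemma aux_S2 (p : ℕ) [Fact p.Prime] (T : ℕ) (F : ℕ → ℕ → ZMod p)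
    (hF0 : ∀ i l, i < l → F i l = 0) :
    ∑ i ∈ range (2*T+1), ∑ l ∈ range (i+1), F i l * (if i+l = 3*T then (-1:ZMod p) else 0)
      = ∑ k ∈ range (T/2+1), -F (2*T-k) (T+k) := by
  classical
  have h1 : ∀ i ∈ range (2*T+1),
      ∑ l ∈ range (i+1), F i l * (if i+l = 3*T then (-1:ZMod p) else 0)
        = ∑ l ∈ range (2*T+1), F i l * (if i+l = 3*T then (-1:ZMod p) else 0) := by
    intro i hi
    rw [mem_range] at hi
    apply Finset.sum_subset
    · rw [range_subset_range]; omega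
    · intro l _ hnl
      rw [mem_range, not_lt] at hnl
      rw [hF0 i l (by omega), zero_mul]
  rw [Finset.sum_congr rfl h1, ← Finset.sum_product']
  have h2 : ∀ q ∈ range (2*T+1) ×ˢ range (2*T+1),
      F q.1 q.2 * (if q.1+q.2 = 3*T then (-1:ZMod p) else 0)
        = if q.1+q.2 = 3*T then -F q.1 q.2 else 0 := by
    intro q _
    split_ifs <;> ring
  rw [Finset.sum_congr rfl h2, ← Finset.sum_filter]
  have h3 : ∑ q ∈ (range (2*T+1) ×ˢ range (2*T+1)).filter (fun q => q.1+q.2 = 3*T),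
      -F q.1 q.2 = ∑ k ∈ range (T+1), -F (2*T-k) (T+k) := by
    refine Finset.sum_nbij' (fun q => q.2 - T) (fun k => (2*T-k, T+k)) ?_ ?_ ?_ ?_ ?_
    · intro q hq
      simp only [mem_filter, mem_product, mem_range] at hq
      simp only [mem_range]; omega
    · intro k hk
      simp only [mem_range] at hk
      simp only [mem_filter, mem_product, mem_range]; omega
    · intro q hq
      simp only [mem_filter, mem_product, mem_range] at hq
      ext <;> simp <;> omega
    · intro k hk
      simp only [mem_range] at hk
      simp only []; omega
    · intro q hq
      simp only [mem_filter, mem_product, mem_range] at hq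
      have e1 : 2*T - (q.2 - T) = q.1 := by omega
      have e2 : T + (q.2 - T) = q.2 := by omega
      rw [e1, e2]
  rw [h3]
  refine (Finset.sum_subset ?_ ?_).symm
  · rw [range_subset_range]; omega
  · intro k hk hnk
    rw [mem_range] at hk
    rw [mem_range, not_lt] at hnk
    rw [hF0 (2*T-k) (T+k) (by omega), neg_zero]


theorem stmt_18 (p : ℕ) [Fact p.Prime] (hp : p % 4 = 1)
    (a b c : ZMod p) (ha : a ≠ 0) (hb : b ≠ 0) (hc : c ≠ 0) :
    ((∑ x : ZMod p, quadraticChar (ZMod p) (a * x ^ 5 + b * x ^ 3 + c * x) : ℤ) : ZMod p)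
      = -((Nat.choose ((p - 1) / 2) ((p - 1) / 4) : ZMod p)) * b ^ ((p - 1) / 4)
          * (a ^ ((p - 1) / 4) + c ^ ((p - 1) / 4))
          * (1 + ∑ k ∈ Finset.Icc 1 ((p - 1) / 8),
              (∏ j ∈ Finset.range k,
                (((8 * j + 1) * (8 * j + 5) : ℕ) : ZMod p)
                  / (((4 * (j + 1) * (4 * j + 3) : ℕ) : ZMod p)))
                * (a * c / b ^ 2) ^ k) := by
  classical
  have hpp : p.Prime := Fact.out
  have hp2 : 2 ≤ p := hpp.two_le
  have hp5 : 5 ≤ p := by omega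
  set T : ℕ := (p - 1) / 4 with hTdef
  have h4T : 4 * T = p - 1 := by omega
  have hT1 : 1 ≤ T := by omega
  set F : ℕ → ℕ → ZMod p := fun i l =>
    (((2*T).choose i : ℕ) : ZMod p) * ((i.choose l : ℕ) : ZMod p)
      * a^l * b^(i-l) * c^(2*T-i) with hF
  have hF0 : ∀ i l : ℕ, i < l → F i l = 0 := by
    intro i l h
    simp only [hF, Nat.choose_eq_zero_of_lt h]
    push_cast
    ring
  -- Step 1
  have step1 : ((∑ x : ZMod p, quadraticChar (ZMod p) (a * x ^ 5 + b * x ^ 3 + c * x) : ℤ) : ZMod p)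
      = ∑ x : ZMod p, (a * x ^ 5 + b * x ^ 3 + c * x)^(2*T) := by
    push_cast
    refine Finset.sum_congr rfl fun x _ => ?_
    set y : ZMod p := a * x ^ 5 + b * x ^ 3 + c * x with hy
    have h := legendreSym.eq_pow p (y.val : ℤ)
    rw [legendreSym] at h
    push_cast at h
    rw [ZMod.natCast_val, ZMod.cast_id] at h
    rw [h, show p/2 = 2*T by omega]
  rw [step1]
  -- Step 2: expansion
  have expand : ∀ x : ZMod p, (a*x^5+b*x^3+c*x)^(2*T)
      = ∑ i ∈ range (2*T+1), ∑ l ∈ range (i+1), F i l * x^(2*T+2*i+2*l) := by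
    intro x
    simp only [hF]
    rw [show a*x^5+b*x^3+c*x = (a*x^5+b*x^3) + c*x by ring, add_pow]
    refine Finset.sum_congr rfl fun i hi => ?_
    rw [mem_range] at hi
    rw [add_pow, Finset.sum_mul, Finset.sum_mul]
    refine Finset.sum_congr rfl fun l hl => ?_
    rw [mem_range] at hl
    obtain ⟨e1, he1⟩ : ∃ e1, i = l + e1 := ⟨i-l, by omega⟩
    obtain ⟨e2, he2⟩ : ∃ e2, 2*T = i + e2 := ⟨2*T-i, by omega⟩
    rw [show i - l = e1 by omega, show 2*T - i = e2 by omega,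
      show 2*T+2*i+2*l = 5*l+3*e1+e2 by omega]
    ring
  rw [Finset.sum_congr rfl fun x _ => expand x]
  -- Step 3: swap sums
  rw [Finset.sum_comm]
  rw [Finset.sum_congr rfl fun i _ => Finset.sum_comm]
  -- Step 4: evaluate inner power sums
  have step4 : ∀ i ∈ range (2*T+1), ∀ l ∈ range (i+1),
      (∑ x : ZMod p, F i l * x^(2*T+2*i+2*l))
        = F i l * (if i+l = T then (-1:ZMod p) else 0)
            + F i l * (if i+l = 3*T then (-1:ZMod p) else 0) := by
    intro i hi l hl
    rw [mem_range] at hi hl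
    rw [← Finset.mul_sum, aux_sum_pow p _ (by omega), ← h4T]
    have hiff : 4*T ∣ 2*T+2*i+2*l ↔ (i+l = T ∨ i+l = 3*T) := by
      constructor
      · rintro ⟨q, hq⟩
        rcases q with _|_|_|q
        · omega
        · left; omega
        · right; omega
        · have h3 : 4*T*3 ≤ 4*T*(q+3) := Nat.mul_le_mul_left _ (by omega)
          rw [← hq] at h3
          omega
      · rintro (h|h)
        exacts [⟨1, by omega⟩, ⟨2, by omega⟩]
    have key : (if 4*T ∣ 2*T+2*i+2*l then (-1:ZMod p) else 0)
        = (if i+l = T then (-1:ZMod p) else 0) + (if i+l = 3*T then (-1:ZMod p) else 0) := by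
      by_cases h1 : i+l = T <;> by_cases h2 : i+l = 3*T
      · omega
      · simp [hiff, h1, h2]; omega
      · simp [hiff, h1, h2]; omega
      · simp [hiff, h1, h2]
    rw [key, mul_add]
  rw [Finset.sum_congr rfl fun i hi => Finset.sum_congr rfl fun l hl => step4 i hi l hl]
  rw [Finset.sum_congr rfl fun i _ => Finset.sum_add_distrib, Finset.sum_add_distrib]
  rw [aux_S1 p T F hF0, aux_S2 p T F hF0, ← Finset.sum_add_distrib]
  -- RHS massage
  rw [show (p-1)/2 = 2*T by omega, show (p-1)/8 = T/2 by omega]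
  have hIcc : (1 : ZMod p) + ∑ k ∈ Icc 1 (T/2),
      (∏ j ∈ range k, (((8*j+1)*(8*j+5) : ℕ) : ZMod p) / (((4*(j+1)*(4*j+3) : ℕ) : ZMod p)))
        * (a*c/b^2)^k
      = ∑ k ∈ range (T/2+1),
        (∏ j ∈ range k, (((8*j+1)*(8*j+5) : ℕ) : ZMod p) / (((4*(j+1)*(4*j+3) : ℕ) : ZMod p)))
        * (a*c/b^2)^k := by
    rw [show range (T/2+1) = insert 0 (Icc 1 (T/2)) by ext n; simp [mem_range, mem_Icc]; omega]
    rw [Finset.sum_insert (by simp)]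
    simp
  rw [hIcc, Finset.mul_sum]
  refine Finset.sum_congr rfl fun k hk => ?_
  rw [mem_range] at hk
  have h2k : 2*k ≤ T := by omega
  simp only [hF]
  rw [show T-k-k = T-2*k by omega, show 2*T-(T-k) = T+k by omega,
    show 2*T-k-(T+k) = T-2*k by omega, show 2*T-(2*T-k) = k by omega]
  have htri : ((((2*T).choose (2*T-k)) : ℕ) : ZMod p) * (((2*T-k).choose (T+k) : ℕ) : ZMod p)
      = ((((2*T).choose (T-k)) : ℕ) : ZMod p) * (((T-k).choose k : ℕ) : ZMod p) := by
    have := congrArg (fun n : ℕ => (n : ZMod p)) (aux_tri T k h2k)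
    push_cast at this
    exact this
  rw [htri]
  have hmerge : (((2*T).choose (T-k) : ℕ) : ZMod p) * (((T-k).choose k : ℕ) : ZMod p)
      = ((((2*T).choose (T-k)) * ((T-k).choose k) : ℕ) : ZMod p) := by
    push_cast
    ring
  rw [hmerge, aux_M p T h4T hp5 k h2k]
  set Pk : ZMod p := ∏ j ∈ range k,
    (((8*j+1)*(8*j+5) : ℕ) : ZMod p) / (((4*(j+1)*(4*j+3) : ℕ) : ZMod p)) with hPk
  set K : ZMod p := (((2*T).choose T : ℕ) : ZMod p) with hK
  obtain ⟨e, he⟩ : ∃ e, T = e + 2*k := ⟨T - 2*k, by omega⟩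
  rw [show T - 2*k = e by omega, he]
  field_simp
  have hb2 : b ^ (k*2) * b⁻¹ ^ (k*2) = 1 := by rw [← mul_pow, mul_inv_cancel₀ hb, one_pow]
  linear_combination (-(-(K*Pk*b^e*a^e*a^(k*3)*c^k) - K*Pk*b^e*a^k*c^e*c^(k*3))) * hb2
end
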